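/- Let Z be a finite set of integers such that either Z is empty, or Z contains at least one positive even integer and at least one negative even integer and consists only of even integers. Then Z ∪ {0} is the imbalance set of some tournament. -/

import Mathlib

/-- A tournament on `Fin n`: loopless, and between any two distinct vertices
there is exactly one arc. -/
def IsTournament {n : ℕ} (r : Fin n → Fin n → Bool) : Prop :=
  (∀ i, r i i = false) ∧ ∀ i j : Fin n, i ≠ j → (r i j = !(r j i))

/-- The score (outdegree) of vertex `i`. -/
def outdeg {n : ℕ} (r : Fin n → Fin n → Bool) (i : Fin n) : ℕ :=
  (Finset.univ.filter fun j => r i j = true).card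

/-- The indegree of vertex `i`. -/
def indeg {n : ℕ} (r : Fin n → Fin n → Bool) (i : Fin n) : ℕ :=
  (Finset.univ.filter fun j => r j i = true).card

/-- The imbalance of vertex `i`: outdegree minus indegree. -/
def imbalance {n : ℕ} (r : Fin n → Fin n → Bool) (i : Fin n) : ℤ :=
  (outdeg r i : ℤ) - (indeg r i : ℤ)

/-- The imbalance set of a digraph. -/
def imbalanceSet {n : ℕ} (r : Fin n → Fin n → Bool) : Finset ℤ :=
  Finset.image (imbalance r) Finset.univ


open Finset


lemma modh1 {n x : ℕ} (h1 : n ≤ x) (h2 : x < 2*n) : x % n = x - n := by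
  rw [Nat.mod_eq_sub_mod h1, Nat.mod_eq_of_lt (by omega)]

lemma modh2 {n s : ℕ} (h0 : 0 < s) (h2 : s < 2*n) (h : s % n = 0) : s = n := by
  rcases lt_or_ge s n with hl | hg
  · rw [Nat.mod_eq_of_lt hl] at h; omega
  · rw [modh1 hg h2, Nat.sub_eq_zero_iff_le] at h
    omega

lemma H3 {n : ℕ} (P : ℕ → Prop) [DecidablePred P] :
    ((univ : Finset (Fin n)).filter fun j => P j.val).card = ((range n).filter P).card := by
  apply Finset.card_bij (fun d _ => d.val)
  · intro a ha
    simp only [mem_filter, mem_univ, true_and] at ha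
    simp only [mem_filter, mem_range]
    exact ⟨a.isLt, ha⟩
  · intro a _ b _ h; exact Fin.val_injective h
  · intro b hb
    simp only [mem_filter, mem_range] at hb
    exact ⟨⟨b, hb.1⟩, by simp [hb.2], rfl⟩

lemma H1 {n m : ℕ} (hm : m ≤ n) (P : ℕ → Prop) [DecidablePred P] :
    ((univ : Finset (Fin n)).filter fun j => j.val < m ∧ P j.val).card
      = ((range m).filter P).card := by
  rw [H3 (fun x => x < m ∧ P x)]
  congr 1
  ext x
  simp only [mem_filter, mem_range]
  constructor
  · rintro ⟨_, hx, hp⟩; exact ⟨hx, hp⟩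
  · rintro ⟨hx, hp⟩; exact ⟨by omega, hx, hp⟩

lemma H2 {n a : ℕ} (ha : a ≤ n) (P : ℕ → Prop) [DecidablePred P] :
    ((univ : Finset (Fin n)).filter fun j => a ≤ j.val ∧ P (j.val - a)).card
      = ((range (n - a)).filter P).card := by
  rw [H3 (fun x => a ≤ x ∧ P (x - a))]
  apply Finset.card_nbij' (fun x => x - a) (fun t => t + a)
  · intro x hx
    simp only [mem_coe, mem_filter, mem_range] at hx ⊢
    exact ⟨by omega, hx.2.2⟩
  · intro t ht
    simp only [mem_coe, mem_filter, mem_range] at ht ⊢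
    refine ⟨by omega, by omega, ?_⟩
    simpa using ht.2
  · intro x hx
    simp only [mem_coe, mem_filter, mem_range] at hx
    dsimp only
    omega
  · intro t _
    simp

lemma finsub_val {n : ℕ} [NeZero n] (a b : Fin n) : (a - b).val = (n - b.val + a.val) % n := by
  rw [Fin.sub_def]

/-- base rotational tournament -/
def bb (Mp Mm : ℕ) : Fin (2*(Mp+Mm)+1) → Fin (2*(Mp+Mm)+1) → Bool :=
  fun i j => decide (1 ≤ (j - i).val ∧ (j - i).val ≤ Mp + Mm)

lemma bb_irrefl (Mp Mm : ℕ) (i : Fin (2*(Mp+Mm)+1)) : bb Mp Mm i i = false := by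
  simp [bb]

lemma bb_antisymm (Mp Mm : ℕ) (i j : Fin (2*(Mp+Mm)+1)) (hij : i ≠ j) :
    bb Mp Mm i j = !(bb Mp Mm j i) := by
  have hd : (j - i) + (i - j) = (0 : Fin (2*(Mp+Mm)+1)) := by rw [sub_add_sub_cancel, sub_self]
  have hv1 : (j - i).val ≠ 0 := fun hc =>
    hij ((sub_eq_zero.mp (Fin.ext hc : j - i = 0)).symm)
  have hv2 : (i - j).val ≠ 0 := fun hc =>
    hij (sub_eq_zero.mp (Fin.ext hc : i - j = 0))
  have hsum : ((j - i).val + (i - j).val) % (2*(Mp+Mm)+1) = 0 := by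
    have := congrArg Fin.val hd
    rwa [Fin.add_def] at this
  have hsum' : (j - i).val + (i - j).val = 2*(Mp+Mm)+1 :=
    modh2 (by omega) (by have := (j-i).isLt; have := (i-j).isLt; omega) hsum
  rcases Bool.eq_false_or_eq_true (bb Mp Mm j i) with hb | hb <;>
    rw [hb] <;>
    simp only [bb, decide_eq_true_iff, decide_eq_false_iff_not, not_and, not_le,
        Bool.not_false, Bool.not_true, decide_eq_true_eq, decide_eq_false_iff_not] at hb ⊢ <;>
    omega

lemma bb_count (Mp Mm : ℕ) (v : Fin (2*(Mp+Mm)+1)) :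
    ((univ : Finset (Fin (2*(Mp+Mm)+1))).filter fun j => bb Mp Mm v j = true).card = Mp + Mm := by
  have step1 : ((univ : Finset (Fin (2*(Mp+Mm)+1))).filter fun j => bb Mp Mm v j = true).card
      = ((univ : Finset (Fin (2*(Mp+Mm)+1))).filter fun d => 1 ≤ d.val ∧ d.val ≤ Mp + Mm).card := by
    apply Finset.card_nbij' (fun j => j - v) (fun d => d + v)
    · intro a ha
      simp only [mem_coe, mem_filter, mem_univ, true_and, bb, decide_eq_true_eq] at ha ⊢
      exact ha
    · intro d hd
      simp only [mem_coe, mem_filter, mem_univ, true_and, bb, decide_eq_true_eq] at hd ⊢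
      simpa using hd
    · intro a _; simp
    · intro d _; simp
  rw [step1, H3 (fun x => 1 ≤ x ∧ x ≤ Mp + Mm)]
  have heq : (range (2*(Mp+Mm)+1)).filter (fun x => 1 ≤ x ∧ x ≤ Mp + Mm)
      = Finset.Icc 1 (Mp + Mm) := by
    ext x
    simp only [mem_filter, mem_range, Finset.mem_Icc]
    omega
  rw [heq, Nat.card_Icc]
  omega

lemma bb_plus_minus (Mp Mm : ℕ) (i j : Fin (2*(Mp+Mm)+1))
    (hi : i.val < Mp) (hj : 2*Mp+Mm+1 ≤ j.val) : bb Mp Mm i j = false := by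
  have hjn : j.val < 2*(Mp+Mm)+1 := j.isLt
  have hval : (j - i).val = 2*(Mp+Mm)+1 - i.val + j.val - (2*(Mp+Mm)+1) := by
    rw [finsub_val, modh1 (by omega) (by omega)]
  simp only [bb, decide_eq_false_iff_not, not_and, not_le]
  omega

lemma bb_minus_plus (Mp Mm : ℕ) (i j : Fin (2*(Mp+Mm)+1))
    (hi : 2*Mp+Mm+1 ≤ i.val) (hj : j.val < Mp) : bb Mp Mm i j = true := by
  have hin : i.val < 2*(Mp+Mm)+1 := i.isLt
  have hval : (j - i).val = 2*(Mp+Mm)+1 - i.val + j.val := by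
    rw [finsub_val, Nat.mod_eq_of_lt (by omega)]
  simp only [bb, decide_eq_true_eq]
  omega

def rr (Mp Mm : ℕ) (fR fC : ℕ → ℤ × ℤ) :
    Fin (2*(Mp+Mm)+1) → Fin (2*(Mp+Mm)+1) → Bool := fun i j =>
  if i.val < Mp ∧ 2*Mp+Mm+1 ≤ j.val then decide (fR i.val = fC (j.val - (2*Mp+Mm+1)))
  else if j.val < Mp ∧ 2*Mp+Mm+1 ≤ i.val then !decide (fR j.val = fC (i.val - (2*Mp+Mm+1)))
  else bb Mp Mm i j

lemma rr_tournament (Mp Mm : ℕ) (fR fC : ℕ → ℤ × ℤ) : IsTournament (rr Mp Mm fR fC) := by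
  constructor
  · intro i
    have h1 : ¬ (i.val < Mp ∧ 2*Mp+Mm+1 ≤ i.val) := by omega
    simp only [rr, if_neg h1, bb_irrefl]
  · intro i j hij
    by_cases c1 : i.val < Mp ∧ 2*Mp+Mm+1 ≤ j.val
    · have c2 : ¬ (j.val < Mp ∧ 2*Mp+Mm+1 ≤ i.val) := by omega
      simp only [rr, if_pos c1, if_neg c2, Bool.not_not]
    · by_cases c2 : j.val < Mp ∧ 2*Mp+Mm+1 ≤ i.val
      · simp only [rr, if_neg c1, if_pos c2]
      · have c1' : ¬ (j.val < Mp ∧ 2*Mp+Mm+1 ≤ i.val) := c2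
        have c2' : ¬ (i.val < Mp ∧ 2*Mp+Mm+1 ≤ j.val) := c1
        simp only [rr, if_neg c1, if_neg c2, if_neg c2', if_neg c1']
        exact bb_antisymm Mp Mm i j hij

lemma deg_sum {n : ℕ} {r : Fin n → Fin n → Bool} (ht : IsTournament r) (i : Fin n) :
    outdeg r i + indeg r i + 1 = n := by
  have e : (univ.filter fun j => r j i = true)
      = ((univ.filter fun j => ¬(r i j = true)).erase i) := by
    ext j
    simp only [mem_filter, mem_univ, true_and, mem_erase]
    by_cases hji : j = i
    · subst hji
      simp [ht.1 j]
    · have := ht.2 j i hji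
      constructor
      · intro hj
        refine ⟨hji, ?_⟩
        rw [this] at hj
        simp only [Bool.not_eq_true'] at hj
        simp [hj]
      · rintro ⟨-, hj⟩
        rw [this]
        simp only [Bool.not_eq_true] at hj
        simp [hj]
  have hmem : i ∈ (univ.filter fun j => ¬(r i j = true)) := by
    simp [ht.1 i]
  have hcard : indeg r i = (univ.filter fun j => ¬(r i j = true)).card - 1 := by
    rw [indeg, e, Finset.card_erase_of_mem hmem]
  have hpos : 1 ≤ (univ.filter fun j => ¬(r i j = true)).card :=
    Finset.card_pos.mpr ⟨i, hmem⟩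
  have hsum := Finset.card_filter_add_card_filter_not
    (s := (univ : Finset (Fin n))) (p := fun j => r i j = true)
  rw [Finset.card_univ, Fintype.card_fin] at hsum
  rw [outdeg]
  omega

lemma outdeg_mid (Mp Mm : ℕ) (fR fC : ℕ → ℤ × ℤ) (v : Fin (2*(Mp+Mm)+1))
    (h1 : Mp ≤ v.val) (h2 : v.val < 2*Mp+Mm+1) :
    outdeg (rr Mp Mm fR fC) v = Mp + Mm := by
  have e : ∀ j, rr Mp Mm fR fC v j = bb Mp Mm v j := by
    intro j
    have c1 : ¬ (v.val < Mp ∧ 2*Mp+Mm+1 ≤ j.val) := by omega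
    have c2 : ¬ (j.val < Mp ∧ 2*Mp+Mm+1 ≤ v.val) := by omega
    simp only [rr, if_neg c1, if_neg c2]
  rw [outdeg]
  simp only [e]
  exact bb_count Mp Mm v

lemma outdeg_plus (Mp Mm : ℕ) (fR fC : ℕ → ℤ × ℤ) (v : Fin (2*(Mp+Mm)+1))
    (hv : v.val < Mp) :
    outdeg (rr Mp Mm fR fC) v
      = (Mp + Mm) + ((range Mm).filter fun t => fR v.val = fC t).card := by
  have key : ∀ j : Fin (2*(Mp+Mm)+1), (rr Mp Mm fR fC v j = true) ↔
      ((j.val < 2*Mp+Mm+1 ∧ bb Mp Mm v j = true)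
        ∨ (2*Mp+Mm+1 ≤ j.val ∧ fR v.val = fC (j.val - (2*Mp+Mm+1)))) := by
    intro j
    by_cases hj : 2*Mp+Mm+1 ≤ j.val
    · simp only [rr, if_pos (⟨hv, hj⟩ : v.val < Mp ∧ 2*Mp+Mm+1 ≤ j.val), decide_eq_true_eq]
      constructor
      · intro h; exact Or.inr ⟨hj, h⟩
      · rintro (⟨h1, _⟩ | ⟨_, h⟩); · omega
        · exact h
    · have c1 : ¬ (v.val < Mp ∧ 2*Mp+Mm+1 ≤ j.val) := by omega
      have c2 : ¬ (j.val < Mp ∧ 2*Mp+Mm+1 ≤ v.val) := by omega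
      simp only [rr, if_neg c1, if_neg c2]
      constructor
      · intro h; exact Or.inl ⟨by omega, h⟩
      · rintro (⟨_, h⟩ | ⟨h1, _⟩); · exact h
        · omega
  rw [outdeg]
  have e : (univ.filter fun j => rr Mp Mm fR fC v j = true)
      = (univ.filter fun j : Fin (2*(Mp+Mm)+1) => j.val < 2*Mp+Mm+1 ∧ bb Mp Mm v j = true)
        ∪ (univ.filter fun j : Fin (2*(Mp+Mm)+1) =>
            2*Mp+Mm+1 ≤ j.val ∧ fR v.val = fC (j.val - (2*Mp+Mm+1))) := by
    ext j
    simp only [mem_filter, mem_univ, true_and, mem_union]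
    rw [key j]
  rw [e, Finset.card_union_of_disjoint]
  · have e1 : (univ.filter fun j : Fin (2*(Mp+Mm)+1) => j.val < 2*Mp+Mm+1 ∧ bb Mp Mm v j = true)
        = (univ.filter fun j => bb Mp Mm v j = true) := by
      ext j
      simp only [mem_filter, mem_univ, true_and]
      constructor
      · rintro ⟨-, h⟩; exact h
      · intro h
        refine ⟨?_, h⟩
        by_contra hc
        rw [bb_plus_minus Mp Mm v j hv (by omega)] at h
        exact absurd h (by simp)
    rw [e1, bb_count]
    have e2 := H2 (n := 2*(Mp+Mm)+1) (a := 2*Mp+Mm+1) (by omega)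
      (fun t => fR v.val = fC t)
    have hMm : 2*(Mp+Mm)+1 - (2*Mp+Mm+1) = Mm := by omega
    rw [hMm] at e2
    rw [e2]
  · rw [Finset.disjoint_left]
    intro a ha hb
    simp only [mem_filter] at ha hb
    omega

lemma outdeg_minus (Mp Mm : ℕ) (fR fC : ℕ → ℤ × ℤ) (v : Fin (2*(Mp+Mm)+1))
    (hv : 2*Mp+Mm+1 ≤ v.val) :
    outdeg (rr Mp Mm fR fC) v
      + ((range Mp).filter fun s => fR s = fC (v.val - (2*Mp+Mm+1))).card = Mp + Mm := by
  have key : ∀ j : Fin (2*(Mp+Mm)+1), (rr Mp Mm fR fC v j = true) ↔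
      ((j.val < Mp ∧ ¬ (fR j.val = fC (v.val - (2*Mp+Mm+1))))
        ∨ (Mp ≤ j.val ∧ bb Mp Mm v j = true)) := by
    intro j
    by_cases hj : j.val < Mp
    · have c1 : ¬ (v.val < Mp ∧ 2*Mp+Mm+1 ≤ j.val) := by omega
      simp only [rr, if_neg c1, if_pos (⟨hj, hv⟩ : j.val < Mp ∧ 2*Mp+Mm+1 ≤ v.val),
        Bool.not_eq_true', decide_eq_false_iff_not]
      constructor
      · intro h; exact Or.inl ⟨hj, h⟩
      · rintro (⟨_, h⟩ | ⟨h1, _⟩); · exact h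
        · omega
    · have c1 : ¬ (v.val < Mp ∧ 2*Mp+Mm+1 ≤ j.val) := by omega
      have c2 : ¬ (j.val < Mp ∧ 2*Mp+Mm+1 ≤ v.val) := by omega
      simp only [rr, if_neg c1, if_neg c2]
      constructor
      · intro h; exact Or.inr ⟨by omega, h⟩
      · rintro (⟨h1, _⟩ | ⟨_, h⟩); · omega
        · exact h
  have e : (univ.filter fun j => rr Mp Mm fR fC v j = true)
      = (univ.filter fun j : Fin (2*(Mp+Mm)+1) =>
            j.val < Mp ∧ ¬ (fR j.val = fC (v.val - (2*Mp+Mm+1))))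
        ∪ (univ.filter fun j : Fin (2*(Mp+Mm)+1) => Mp ≤ j.val ∧ bb Mp Mm v j = true) := by
    ext j
    simp only [mem_filter, mem_univ, true_and, mem_union]
    rw [key j]
  rw [outdeg, e, Finset.card_union_of_disjoint]
  · -- part A
    have eA := H1 (n := 2*(Mp+Mm)+1) (m := Mp) (by omega)
      (fun s => ¬ (fR s = fC (v.val - (2*Mp+Mm+1))))
    rw [eA]
    have hA := Finset.card_filter_add_card_filter_not
      (s := range Mp) (p := fun s => fR s = fC (v.val - (2*Mp+Mm+1)))
    rw [Finset.card_range] at hA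
    -- part B
    have hBsplit : ((univ : Finset (Fin (2*(Mp+Mm)+1))).filter fun j => bb Mp Mm v j = true)
        = (univ.filter fun j : Fin (2*(Mp+Mm)+1) => j.val < Mp ∧ bb Mp Mm v j = true)
          ∪ (univ.filter fun j : Fin (2*(Mp+Mm)+1) => Mp ≤ j.val ∧ bb Mp Mm v j = true) := by
      ext j
      simp only [mem_filter, mem_univ, true_and, mem_union]
      constructor
      · intro h
        rcases lt_or_ge j.val Mp with hc | hc
        · exact Or.inl ⟨hc, h⟩
        · exact Or.inr ⟨hc, h⟩
      · rintro (⟨_, h⟩ | ⟨_, h⟩) <;> exact h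
    have hBcount := bb_count Mp Mm v
    rw [hBsplit, Finset.card_union_of_disjoint (by
      rw [Finset.disjoint_left]
      intro a ha hb
      simp only [mem_filter] at ha hb
      omega)] at hBcount
    have hC1 : (univ.filter fun j : Fin (2*(Mp+Mm)+1) => j.val < Mp ∧ bb Mp Mm v j = true)
        = (univ.filter fun j : Fin (2*(Mp+Mm)+1) => j.val < Mp ∧ True) := by
      ext j
      simp only [mem_filter, mem_univ, true_and, and_true]
      constructor
      · rintro ⟨h, -⟩; exact h
      · intro h; exact ⟨h, bb_minus_plus Mp Mm v j hv h⟩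
    have hC2 := H1 (n := 2*(Mp+Mm)+1) (m := Mp) (by omega) (fun _ => True)
    rw [hC1, hC2, Finset.filter_true_of_mem (by intro _ _; trivial), Finset.card_range] at hBcount
    omega
  · rw [Finset.disjoint_left]
    intro a ha hb
    simp only [mem_filter] at ha hb
    omega

lemma imb_mid (Mp Mm : ℕ) (fR fC : ℕ → ℤ × ℤ) (v : Fin (2*(Mp+Mm)+1))
    (h1 : Mp ≤ v.val) (h2 : v.val < 2*Mp+Mm+1) :
    imbalance (rr Mp Mm fR fC) v = 0 := by
  have hd := deg_sum (rr_tournament Mp Mm fR fC) v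
  have ho := outdeg_mid Mp Mm fR fC v h1 h2
  rw [imbalance, ho]
  rw [ho] at hd
  omega

lemma imb_plus (Mp Mm : ℕ) (fR fC : ℕ → ℤ × ℤ) (v : Fin (2*(Mp+Mm)+1))
    (hv : v.val < Mp) :
    imbalance (rr Mp Mm fR fC) v
      = 2 * ((range Mm).filter fun t => fR v.val = fC t).card := by
  have hd := deg_sum (rr_tournament Mp Mm fR fC) v
  have ho := outdeg_plus Mp Mm fR fC v hv
  rw [imbalance, ho]
  rw [ho] at hd
  omega

lemma imb_minus (Mp Mm : ℕ) (fR fC : ℕ → ℤ × ℤ) (v : Fin (2*(Mp+Mm)+1))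
    (hv : 2*Mp+Mm+1 ≤ v.val) :
    imbalance (rr Mp Mm fR fC) v
      = -2 * ((range Mp).filter fun s => fR s = fC (v.val - (2*Mp+Mm+1))).card := by
  have hd := deg_sum (rr_tournament Mp Mm fR fC) v
  have ho := outdeg_minus Mp Mm fR fC v hv
  rw [imbalance]
  omega

lemma fiber_card {α : Type*} [DecidableEq α] {T : Finset ((_ : α) × ℕ)} (f : ℕ → α)
    (hf : ∀ i (h : i < T.card), f i = ((T.equivFin.symm ⟨i, h⟩ : {a // a ∈ T}) : (_ : α) × ℕ).1)
    (x₀ : α) :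
    ((range T.card).filter fun t => f t = x₀).card
      = (T.filter fun s => s.1 = x₀).card := by
  apply Finset.card_bij (fun t ht =>
    ((T.equivFin.symm ⟨t, mem_range.mp (mem_filter.mp ht).1⟩ : {a // a ∈ T}) : (_ : α) × ℕ))
  · intro t ht
    rcases mem_filter.mp ht with ⟨htr, hft⟩
    rw [mem_filter]
    refine ⟨(T.equivFin.symm ⟨t, mem_range.mp htr⟩).property, ?_⟩
    rw [← hf t (mem_range.mp htr)]
    exact hft
  · intro a ha b hb hab
    have := T.equivFin.symm.injective (Subtype.ext hab)
    exact Fin.mk.injEq .. ▸ (by injection this)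
  · intro s hs
    rcases mem_filter.mp hs with ⟨hsT, hs1⟩
    refine ⟨(T.equivFin ⟨s, hsT⟩).val, ?_, ?_⟩
    · rw [mem_filter, mem_range]
      refine ⟨(T.equivFin ⟨s, hsT⟩).isLt, ?_⟩
      rw [hf _ (T.equivFin ⟨s, hsT⟩).isLt]
      rw [Fin.eta, Equiv.symm_apply_apply]
      exact hs1
    · rw [Fin.eta, Equiv.symm_apply_apply]

lemma exists_index {α : Type*} [DecidableEq α] {T : Finset ((_ : α) × ℕ)} (f : ℕ → α)
    (hf : ∀ i (h : i < T.card), f i = ((T.equivFin.symm ⟨i, h⟩ : {a // a ∈ T}) : (_ : α) × ℕ).1)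
    (x₀ : α) (hs : (⟨x₀, 0⟩ : (_ : α) × ℕ) ∈ T) :
    ∃ i, i < T.card ∧ f i = x₀ := by
  refine ⟨(T.equivFin ⟨⟨x₀, 0⟩, hs⟩).val, (T.equivFin ⟨⟨x₀, 0⟩, hs⟩).isLt, ?_⟩
  rw [hf _ (T.equivFin ⟨⟨x₀, 0⟩, hs⟩).isLt, Fin.eta, Equiv.symm_apply_apply]

lemma sigma_fiber {α : Type*} [DecidableEq α] (S : Finset α) (mult : α → ℕ) (x₀ : α)
    (hx : x₀ ∈ S) :
    ((S.sigma fun x => range (mult x)).filter fun s => s.1 = x₀).card = mult x₀ := by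
  have e : (S.sigma fun x => range (mult x)).filter (fun s => s.1 = x₀)
      = ({x₀} : Finset α).sigma fun x => range (mult x) := by
    ext ⟨a, b⟩
    simp only [Finset.mem_sigma, Finset.mem_filter, Finset.mem_singleton, mem_range]
    constructor
    · rintro ⟨⟨-, hb⟩, rfl⟩; exact ⟨rfl, hb⟩
    · rintro ⟨rfl, hb⟩; exact ⟨⟨hx, hb⟩, rfl⟩
  rw [e, Finset.card_sigma]
  simp

lemma label_mem {α : Type*} [DecidableEq α] {T : Finset ((_ : α) × ℕ)} {S : Finset α}
    {mult : α → ℕ} (hT : T = S.sigma fun x => range (mult x)) (f : ℕ → α)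
    (hf : ∀ i (h : i < T.card), f i = ((T.equivFin.symm ⟨i, h⟩ : {a // a ∈ T}) : (_ : α) × ℕ).1) :
    ∀ i, i < T.card → f i ∈ S := by
  subst hT
  intro i hi
  rw [hf i hi]
  exact (Finset.mem_sigma.mp (((S.sigma fun x => range (mult x)).equivFin.symm ⟨i, hi⟩).property)).1

lemma imbset (Mp Mm : ℕ) (fR fC : ℕ → ℤ × ℤ) (Z : Finset ℤ)
    (h1 : ∀ i, i < Mp → (2 * (((range Mm).filter fun t => fR i = fC t).card : ℤ)) ∈ Z)
    (h2 : ∀ j, j < Mm → ((-2) * (((range Mp).filter fun s => fR s = fC j).card : ℤ)) ∈ Z)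
    (h3 : ∀ z ∈ Z,
      (∃ i, i < Mp ∧ (2 * (((range Mm).filter fun t => fR i = fC t).card : ℤ)) = z)
      ∨ (∃ j, j < Mm ∧ ((-2) * (((range Mp).filter fun s => fR s = fC j).card : ℤ)) = z)
      ∨ z = 0) :
    ∃ (n : ℕ) (r : Fin n → Fin n → Bool),
      IsTournament r ∧ imbalanceSet r = insert 0 Z := by
  refine ⟨2*(Mp+Mm)+1, rr Mp Mm fR fC, rr_tournament Mp Mm fR fC, ?_⟩
  ext a
  rw [imbalanceSet, Finset.mem_image]
  constructor
  · rintro ⟨v, -, rfl⟩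
    rcases lt_or_ge v.val Mp with hv | hv
    · rw [imb_plus Mp Mm fR fC v hv]
      exact Finset.mem_insert_of_mem (h1 v.val hv)
    · rcases lt_or_ge v.val (2*Mp+Mm+1) with hv2 | hv2
      · rw [imb_mid Mp Mm fR fC v hv hv2]
        exact Finset.mem_insert_self 0 _
      · rw [imb_minus Mp Mm fR fC v hv2]
        have hj : v.val - (2*Mp+Mm+1) < Mm := by
          have := v.isLt
          omega
        exact Finset.mem_insert_of_mem (h2 _ hj)
  · intro ha
    rcases Finset.mem_insert.mp ha with rfl | haZ
    · refine ⟨⟨Mp, by omega⟩, Finset.mem_univ _, ?_⟩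
      rw [imb_mid Mp Mm fR fC _ (by simp) (by simp; omega)]
    · rcases h3 a haZ with ⟨i, hi, hval⟩ | ⟨j, hj, hval⟩ | rfl
      · refine ⟨⟨i, by omega⟩, Finset.mem_univ _, ?_⟩
        rw [imb_plus Mp Mm fR fC _ (by simpa using hi)]
        exact hval
      · refine ⟨⟨2*Mp+Mm+1+j, by omega⟩, Finset.mem_univ _, ?_⟩
        rw [imb_minus Mp Mm fR fC _ (by simp)]
        have e : (2*Mp+Mm+1+j) - (2*Mp+Mm+1) = j := by omega
        simp only [e]
        exact hval
      · refine ⟨⟨Mp, by omega⟩, Finset.mem_univ _, ?_⟩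
        rw [imb_mid Mp Mm fR fC _ (by simp) (by simp; omega)]


/-- If `Z` is empty, or `Z` consists of even integers and contains
a positive and a negative element, then `Z ∪ {0}` is a tournament imbalance set. -/
theorem insert_zero_imbalanceSet (Z : Finset ℤ)
    (h : Z = ∅ ∨ ((∀ z ∈ Z, Even z) ∧ (∃ z ∈ Z, 0 < z) ∧ (∃ z ∈ Z, z < 0))) :
    ∃ (n : ℕ) (r : Fin n → Fin n → Bool),
      IsTournament r ∧ imbalanceSet r = insert 0 Z := by
  classical
  rcases h with rfl | ⟨heven, ⟨zp, hzp, hzppos⟩, zn, hzn, hznneg⟩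
  · refine ⟨1, fun _ _ => false, ⟨fun _ => rfl, fun i j hij => absurd (Subsingleton.elim i j) hij⟩, ?_⟩
    ext a
    simp [imbalanceSet, imbalance, outdeg, indeg]
  · set Pos : Finset ℤ := Z.filter (fun z => 0 < z) with hPos
    set Neg : Finset ℤ := Z.filter (fun z => z < 0) with hNeg
    set S : Finset (ℤ × ℤ) := Pos ×ˢ Neg with hS
    set multR : ℤ × ℤ → ℕ := fun x => x.2.natAbs / 2 with hmultR
    set multC : ℤ × ℤ → ℕ := fun x => x.1.toNat / 2 with hmultC
    set TR : Finset ((_ : ℤ × ℤ) × ℕ) := S.sigma fun x => range (multR x) with hTR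
    set TC : Finset ((_ : ℤ × ℤ) × ℕ) := S.sigma fun x => range (multC x) with hTC
    set fR : ℕ → ℤ × ℤ := fun i =>
      if h : i < TR.card then ((TR.equivFin.symm ⟨i, h⟩ : {a // a ∈ TR}) : (_ : ℤ × ℤ) × ℕ).1
      else (0, 0) with hfR
    set fC : ℕ → ℤ × ℤ := fun j =>
      if h : j < TC.card then ((TC.equivFin.symm ⟨j, h⟩ : {a // a ∈ TC}) : (_ : ℤ × ℤ) × ℕ).1
      else (0, 0) with hfC
    have hfR' : ∀ i (h : i < TR.card),
        fR i = ((TR.equivFin.symm ⟨i, h⟩ : {a // a ∈ TR}) : (_ : ℤ × ℤ) × ℕ).1 := by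
      intro i h; rw [hfR]; simp [h]
    have hfC' : ∀ j (h : j < TC.card),
        fC j = ((TC.equivFin.symm ⟨j, h⟩ : {a // a ∈ TC}) : (_ : ℤ × ℤ) × ℕ).1 := by
      intro j h; rw [hfC]; simp [h]
    -- membership of labels
    have hmemR : ∀ i, i < TR.card → fR i ∈ S := label_mem hTR fR hfR'
    have hmemC : ∀ j, j < TC.card → fC j ∈ S := label_mem hTC fC hfC'
    -- parities and values
    have hSprop : ∀ x ∈ S, x.1 ∈ Z ∧ 0 < x.1 ∧ Even x.1 ∧ x.2 ∈ Z ∧ x.2 < 0 ∧ Even x.2 := by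
      intro x hx
      rw [hS, Finset.mem_product] at hx
      rw [hPos, Finset.mem_filter] at hx
      rw [hNeg, Finset.mem_filter] at hx
      obtain ⟨⟨h1, h2⟩, h3, h4⟩ := hx
      exact ⟨h1, h2, heven _ h1, h3, h4, heven _ h3⟩
    have hvalC : ∀ x ∈ S, 2 * ((multC x : ℕ) : ℤ) = x.1 := by
      intro x hx
      obtain ⟨-, hpos, ⟨c, hc⟩, -⟩ := hSprop x hx
      rw [hmultC]
      simp only
      omega
    have hvalR : ∀ x ∈ S, (-2) * ((multR x : ℕ) : ℤ) = x.2 := by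
      intro x hx
      obtain ⟨-, -, -, -, hneg, c, hc⟩ := hSprop x hx
      rw [hmultR]
      simp only
      omega
    -- fiber counts
    have hcntC : ∀ x₀ ∈ S, (((range TC.card).filter fun t => fC t = x₀).card : ℕ) = multC x₀ := by
      intro x₀ hx₀
      rw [fiber_card fC hfC' x₀, hTC, sigma_fiber S multC x₀ hx₀]
    have hcntR : ∀ x₀ ∈ S, (((range TR.card).filter fun s => fR s = x₀).card : ℕ) = multR x₀ := by
      intro x₀ hx₀
      rw [fiber_card fR hfR' x₀, hTR, sigma_fiber S multR x₀ hx₀]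
    -- now apply imbset
    apply imbset TR.card TC.card fR fC Z
    · intro i hi
      have hx := hmemR i hi
      have e : ((range TC.card).filter fun t => fR i = fC t)
          = ((range TC.card).filter fun t => fC t = fR i) := by
        apply Finset.filter_congr
        intro t _
        exact eq_comm
      rw [e, hcntC _ hx, hvalC _ hx]
      exact (hSprop _ hx).1
    · intro j hj
      have hx := hmemC j hj
      rw [hcntR _ hx, hvalR _ hx]
      exact (hSprop _ hx).2.2.2.1
    · intro z hz
      rcases lt_trichotomy z 0 with hzneg' | rfl | hzpos'
      · -- z negative : use x₀ = (zp, z)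
        right; left
        have hx₀ : ((zp, z) : ℤ × ℤ) ∈ S := by
          rw [hS, Finset.mem_product, hPos, hNeg, Finset.mem_filter, Finset.mem_filter]
          exact ⟨⟨hzp, hzppos⟩, hz, hzneg'⟩
        have hmult : 0 < multC (zp, z) := by
          obtain ⟨-, hpos, ⟨c, hc⟩, -⟩ := hSprop _ hx₀
          rw [hmultC]
          simp only
          omega
        have hsmem : (⟨(zp, z), 0⟩ : (_ : ℤ × ℤ) × ℕ) ∈ TC := by
          rw [hTC, Finset.mem_sigma]
          exact ⟨hx₀, by simpa using hmult⟩
        obtain ⟨j, hj, hfj⟩ := exists_index fC hfC' ((zp, z) : ℤ × ℤ) hsmem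
        refine ⟨j, hj, ?_⟩
        rw [hfj, hcntR _ hx₀, hvalR _ hx₀]
      · right; right; rfl
      · -- z positive : use x₀ = (z, zn)
        left
        have hx₀ : ((z, zn) : ℤ × ℤ) ∈ S := by
          rw [hS, Finset.mem_product, hPos, hNeg, Finset.mem_filter, Finset.mem_filter]
          exact ⟨⟨hz, hzpos'⟩, hzn, hznneg⟩
        have hmult : 0 < multR (z, zn) := by
          obtain ⟨-, -, -, -, hneg, c, hc⟩ := hSprop _ hx₀
          rw [hmultR]
          simp only
          omega
        have hsmem : (⟨(z, zn), 0⟩ : (_ : ℤ × ℤ) × ℕ) ∈ TR := by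
          rw [hTR, Finset.mem_sigma]
          exact ⟨hx₀, by simpa using hmult⟩
        obtain ⟨i, hi, hfi⟩ := exists_index fR hfR' ((z, zn) : ℤ × ℤ) hsmem
        refine ⟨i, hi, ?_⟩
        have e : ((range TC.card).filter fun t => fR i = fC t)
            = ((range TC.card).filter fun t => fC t = fR i) := by
          apply Finset.filter_congr
          intro t _
          exact eq_comm
        rw [hfi] at e ⊢
        rw [e, hcntC _ hx₀, hvalC _ hx₀]
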